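/- For every threshold t ∈ [0, ∞], the complex of approximate joins F^t is a data subcomplex (closed under faces and degeneracies) and satisfies the strong join condition; moreover F^{t₁} ⊆ F^{t₂} whenever t₁ ≤ t₂, F⁰ is the complex of perfect joins, and F^∞ is the ambient complex. -/

import Mathlib

open MeasureTheory
open scoped ENNReal

variable (A : Type*) (Val : A → Type*) [∀ a, MeasurableSpace (Val a)]

/-- A data table: a finite attribute list `T : Fin n → A` together with a measure on the
product of the corresponding value spaces.  (The level `n` is the length of the list;
`n = 0` is the empty list, whose value space is a singleton.) -/
def DT : Type _ := Σ n : ℕ, Σ T : Fin n → A, Measure (∀ k, Val (T k))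

/-- Face map `d_i`: delete the `i`-th attribute and marginalize the measure. -/
noncomputable def face {n : ℕ} (T : Fin (n+1) → A) (i : Fin (n+1))
    (τ : Measure (∀ k, Val (T k))) : Measure (∀ k : Fin n, Val (T (i.succAbove k))) :=
  τ.map fun x k => x (i.succAbove k)

/-- Degeneracy map `s_i`: repeat the `i`-th attribute and push the measure forward along
the diagonal duplication (Dirac diagonal). -/
noncomputable def degen {n : ℕ} (T : Fin n → A) (i : Fin n)
    (τ : Measure (∀ k, Val (T k))) : Measure (∀ k : Fin (n+1), Val (T (i.predAbove k))) :=
  τ.map fun x k => x (i.predAbove k)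

/-- Reduction (marginalization) along an attribute inclusion `ι`. -/
noncomputable def red {m n : ℕ} (T : Fin n → A) (ι : Fin m → Fin n)
    (τ : Measure (∀ k, Val (T k))) : Measure (∀ k : Fin m, Val (T (ι k))) :=
  τ.map fun x k => x (ι k)

/-- A data subcomplex: a collection of data tables closed under the face
(marginalization) and degeneracy (diagonal) maps. -/
def IsSubcomplex (S : Set (DT A Val)) : Prop :=
  (∀ (n : ℕ) (T : Fin (n+1) → A) (τ : Measure (∀ k, Val (T k))) (i : Fin (n+1)),
      ⟨n+1, T, τ⟩ ∈ S → ⟨n, T ∘ i.succAbove, face A Val T i τ⟩ ∈ S) ∧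
  (∀ (n : ℕ) (T : Fin n → A) (τ : Measure (∀ k, Val (T k))) (i : Fin n),
      ⟨n, T, τ⟩ ∈ S → ⟨n+1, T ∘ i.predAbove, degen A Val T i τ⟩ ∈ S)

/-- The combinatorial data of a merge of two attribute inclusions
`ι01 : T₀ ↪ T₀₁`, `ι02 : T₀ ↪ T₀₂` into a common list of length `n012`: order-preserving
inclusions of the two lists whose images cover the merged index set, agree on the common
sublist, and overlap exactly in it. -/
structure MergeTop (n0 n01 n02 n012 : ℕ)
    (ι01 : Fin n0 → Fin n01) (ι02 : Fin n0 → Fin n02) : Type where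
  μ01 : Fin n01 → Fin n012
  μ02 : Fin n02 → Fin n012
  mono01 : StrictMono μ01
  mono02 : StrictMono μ02
  comm : μ01 ∘ ι01 = μ02 ∘ ι02
  cover : Set.range μ01 ∪ Set.range μ02 = Set.univ
  inter : Set.range μ01 ∩ Set.range μ02 = Set.range (μ01 ∘ ι01)

/-- The strong join condition: for every pair of member tables that are well-aligned along
a common sublist (their reductions to it agree), *every* join of them — every measure on a
merged list reducing to the two given measures — is again a member. -/
def StrongJoinCondition (S : Set (DT A Val)) : Prop :=
  ∀ {n0 n01 n02 n012 : ℕ} (ι01 : Fin n0 → Fin n01) (ι02 : Fin n0 → Fin n02),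
    StrictMono ι01 → StrictMono ι02 →
    ∀ (M : MergeTop n0 n01 n02 n012 ι01 ι02) (T012 : Fin n012 → A)
      (τ01 : Measure (∀ k : Fin n01, Val (T012 (M.μ01 k))))
      (τ02 : Measure (∀ k : Fin n02, Val (T012 (M.μ02 k)))),
      ⟨n01, T012 ∘ M.μ01, τ01⟩ ∈ S → ⟨n02, T012 ∘ M.μ02, τ02⟩ ∈ S →
      HEq (red A Val (T012 ∘ M.μ01) ι01 τ01) (red A Val (T012 ∘ M.μ02) ι02 τ02) →
      ∀ τ012 : Measure (∀ k, Val (T012 k)),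
        red A Val T012 M.μ01 τ012 = τ01 → red A Val T012 M.μ02 τ012 = τ02 →
        ⟨n012, T012, τ012⟩ ∈ S

/-- The complex of perfect joins F⁰ of a data subcomplex `S`: all tables `(T,τ)` such
that every entry of `T` is contained in some sublist `S' ↪ T` for which the reduction of
`τ` to `S'` is a member of `S`. -/
def PerfectJoins (S : Set (DT A Val)) : Set (DT A Val) :=
  {x | ∀ i : Fin x.1, ∃ (m : ℕ) (ι : Fin m → Fin x.1),
        StrictMono ι ∧ i ∈ Set.range ι ∧
        ⟨m, x.2.1 ∘ ι, red A Val x.2.1 ι x.2.2⟩ ∈ S}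

/-- Wasserstein-1 distance with the L^∞ (sup) ground metric on a finite product. -/
noncomputable def wass {ι : Type*} [Fintype ι] (E : ι → Type*) [∀ i, MetricSpace (E i)]
    [∀ i, MeasurableSpace (E i)] (μ1 μ2 : Measure (∀ i, E i)) : ℝ≥0∞ :=
  ⨅ μ ∈ {μ : Measure ((∀ i, E i) × (∀ i, E i)) |
      μ.map Prod.fst = μ1 ∧ μ.map Prod.snd = μ2},
    ∫⁻ p, ENNReal.ofReal (dist p.1 p.2) ∂μ

/-- The complex of approximate joins F^t of a data subcomplex `S`: all tables `(T,τ)`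
such that every entry of `T` is contained in some sublist `S' ↪ T` carrying a member
table `(S',σ)` of `S` with `w_{S'}(red_{S'} τ, σ) ≤ t`. -/
def ApproxJoins [∀ a, MetricSpace (Val a)] (S : Set (DT A Val)) (t : ℝ≥0∞) :
    Set (DT A Val) :=
  {x | ∀ i : Fin x.1, ∃ (m : ℕ) (ι : Fin m → Fin x.1)
        (σ : Measure (∀ k : Fin m, Val (x.2.1 (ι k)))),
        StrictMono ι ∧ i ∈ Set.range ι ∧ ⟨m, x.2.1 ∘ ι, σ⟩ ∈ S ∧
        wass (fun k : Fin m => Val (x.2.1 (ι k))) (red A Val x.2.1 ι x.2.2) σ ≤ t}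


/-! ### Auxiliary lemmas -/

lemma measurable_pr {n m : ℕ} (E : Fin n → Type*) [∀ i, MeasurableSpace (E i)]
    (κ : Fin m → Fin n) : Measurable fun (x : ∀ i, E i) k => x (κ k) :=
  measurable_pi_lambda _ fun k => measurable_pi_apply _

lemma strictMono_fin_id {n : ℕ} (κ : Fin n → Fin n) (h : StrictMono κ) : κ = id :=
  (StrictMono.range_inj h strictMono_id).1
    ((Finite.injective_iff_surjective.mp h.injective).range_eq.trans Set.range_id.symm)

lemma exists_not_mem_range {m n : ℕ} (h : m < n) (κ : Fin m → Fin n) :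
    ∃ i, i ∉ Set.range κ := by
  by_contra hc
  push_neg at hc
  have hsurj : Function.Surjective κ := fun i => hc i
  have := Fintype.card_le_of_surjective κ hsurj
  simp at this; omega

/-- Factor a strictly monotone map through `succAbove i` when `i` is not in the range. -/
lemma factor_succAbove {m n : ℕ} (κ : Fin m → Fin (n+1)) (hκ : StrictMono κ)
    {i : Fin (n+1)} (hi : i ∉ Set.range κ) :
    ∃ κ' : Fin m → Fin n, StrictMono κ' ∧ i.succAbove ∘ κ' = κ := by
  have hne : ∀ k, κ k ≠ i := fun k h => hi ⟨k, h⟩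
  choose κ' hκ' using fun k => Fin.exists_succAbove_eq (hne k)
  refine ⟨κ', fun a b hab => ?_, funext hκ'⟩
  rw [← Fin.succAbove_lt_succAbove_iff (p := i), hκ' a, hκ' b]
  exact hκ hab

lemma exists_section {n : ℕ} (i : Fin n) (k : Fin (n+1)) :
    ∃ s : Fin n → Fin (n+1), StrictMono s ∧ (∀ q, i.predAbove (s q) = q) ∧
      s (i.predAbove k) = k := by
  by_cases hk : k = i.castSucc
  · refine ⟨i.succ.succAbove, Fin.strictMono_succAbove _, fun q => ?_, ?_⟩
    · rcases le_or_gt q i with h | h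
      · rw [Fin.succAbove_of_castSucc_lt _ _
            (lt_of_le_of_lt (Fin.castSucc_le_castSucc_iff.2 h) (Fin.castSucc_lt_succ (i := i))),
          Fin.predAbove_of_le_castSucc _ _ (Fin.castSucc_le_castSucc_iff.2 h),
          Fin.castPred_castSucc]
      · rw [Fin.succAbove_of_le_castSucc _ _ (Fin.succ_le_castSucc_iff.2 h),
          Fin.predAbove_of_castSucc_lt _ _ (Fin.castSucc_lt_succ_iff.2 h.le),
          Fin.pred_succ]
    · subst hk
      rw [Fin.predAbove_of_le_castSucc _ _ le_rfl, Fin.castPred_castSucc,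
        Fin.succAbove_of_castSucc_lt _ _ (Fin.castSucc_lt_succ (i := i))]
  · exact ⟨i.castSucc.succAbove, Fin.strictMono_succAbove _, Fin.predAbove_succAbove i,
      Fin.succAbove_predAbove hk⟩

lemma red_comp {m p n : ℕ} (T : Fin n → A) (ι : Fin p → Fin n) (κ : Fin m → Fin p)
    (τ : Measure (∀ k, Val (T k))) :
    red A Val T (ι ∘ κ) τ = red A Val (T ∘ ι) κ (red A Val T ι τ) := by
  unfold red
  exact (Measure.map_map (measurable_pr (fun k : Fin p => Val (T (ι k))) κ)
    (measurable_pr (fun k : Fin n => Val (T k)) ι)).symm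

lemma red_congr_heq {m n : ℕ} (T : Fin n → A) (τ : Measure (∀ k, Val (T k)))
    {ι₁ ι₂ : Fin m → Fin n} (h : ι₁ = ι₂) :
    HEq (red A Val T ι₁ τ) (red A Val T ι₂ τ) := by
  subst h; rfl

/-- A data subcomplex is closed under marginalization along arbitrary strictly
monotone inclusions. -/
lemma red_mem (S : Set (DT A Val)) (hsub : IsSubcomplex A Val S) :
    ∀ {n m : ℕ} (κ : Fin m → Fin n), StrictMono κ →
    ∀ (f : Fin n → A) (σ : Measure (∀ k, Val (f k))), (⟨n, f, σ⟩ : DT A Val) ∈ S →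
    (⟨m, f ∘ κ, red A Val f κ σ⟩ : DT A Val) ∈ S := by
  intro n
  induction n with
  | zero =>
    intro m κ hκ f σ hmem
    have hm : m = 0 := by
      cases m with
      | zero => rfl
      | succ m => exact (κ 0).elim0
    subst hm
    have hid : κ = id := strictMono_fin_id κ hκ
    subst hid
    have : red A Val f id σ = σ := Measure.map_id
    rw [this]; exact hmem
  | succ n IH =>
    intro m κ hκ f σ hmem
    have hle : m ≤ n + 1 := by
      simpa using Fintype.card_le_of_injective κ hκ.injective
    rcases eq_or_lt_of_le hle with heq | hlt
    · subst heq
      have hid : κ = id := strictMono_fin_id κ hκ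
      subst hid
      have : red A Val f id σ = σ := Measure.map_id
      rw [this]; exact hmem
    · obtain ⟨i, hi⟩ := exists_not_mem_range hlt κ
      obtain ⟨κ', hκ', hfac⟩ := factor_succAbove κ hκ hi
      subst hfac
      have hface := hsub.1 n f σ i hmem
      have hstep := IH κ' hκ' (f ∘ i.succAbove) (face A Val f i σ) hface
      have hred : red A Val f (i.succAbove ∘ κ') σ
          = red A Val (f ∘ i.succAbove) κ' (face A Val f i σ) :=
        red_comp A Val f i.succAbove κ' σ
      rw [hred]
      exact hstep

section WassLemmas

lemma measurable_ofReal_dist {α : Type*} [MetricSpace α] [MeasurableSpace α] [BorelSpace α]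
    [SecondCountableTopology α] :
    Measurable fun p : α × α => ENNReal.ofReal (dist p.1 p.2) :=
  (ENNReal.continuous_ofReal.comp continuous_dist).measurable

variable {n m : ℕ} (E : Fin n → Type*) [∀ i, MetricSpace (E i)]
  [∀ i, MeasurableSpace (E i)] [∀ i, BorelSpace (E i)] [∀ i, SecondCountableTopology (E i)]

lemma wass_map_le (κ : Fin m → Fin n) (μ ν : Measure (∀ i, E i)) :
    wass (fun k => E (κ k)) (μ.map fun x k => x (κ k)) (ν.map fun x k => x (κ k))
      ≤ wass E μ ν := by
  unfold wass
  refine le_iInf₂ fun γ hγ => ?_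
  obtain ⟨h1, h2⟩ := hγ
  have hprm : Measurable fun (x : ∀ i, E i) k => x (κ k) := measurable_pr E κ
  refine iInf₂_le_of_le
    (γ.map (Prod.map (fun x k => x (κ k)) (fun x k => x (κ k)))) ⟨?_, ?_⟩ ?_
  · rw [Measure.map_map measurable_fst (hprm.prodMap hprm), ← h1,
      Measure.map_map hprm measurable_fst]
    rfl
  · rw [Measure.map_map measurable_snd (hprm.prodMap hprm), ← h2,
      Measure.map_map hprm measurable_snd]
    rfl
  · rw [lintegral_map measurable_ofReal_dist (hprm.prodMap hprm)]
    refine lintegral_mono fun p => ENNReal.ofReal_le_ofReal ?_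
    exact (dist_pi_le_iff dist_nonneg).2 fun k => dist_le_pi_dist p.1 p.2 (κ k)

lemma wass_self_le_zero (μ : Measure (∀ i, E i)) : wass E μ μ ≤ 0 := by
  unfold wass
  have hd : Measurable fun (y : ∀ i, E i) => (y, y) := measurable_id.prodMk measurable_id
  refine iInf₂_le_of_le (μ.map fun y => (y, y)) ⟨?_, ?_⟩ ?_
  · rw [Measure.map_map measurable_fst hd]; exact Measure.map_id
  · rw [Measure.map_map measurable_snd hd]; exact Measure.map_id
  · rw [lintegral_map measurable_ofReal_dist hd]
    simp

lemma meas_le_of_couplings {α : Type*} [MetricSpace α] [MeasurableSpace α] [BorelSpace α]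
    [SecondCountableTopology α] (μ ν : Measure α) [IsFiniteMeasure ν]
    (hc : ∀ ε : ℝ≥0∞, 0 < ε → ∃ γ : Measure (α × α), γ.map Prod.fst = μ ∧
      γ.map Prod.snd = ν ∧ ∫⁻ p, ENNReal.ofReal (dist p.1 p.2) ∂γ ≤ ε)
    {C : Set α} (hC : IsClosed C) : μ C ≤ ν C := by
  have hthick : ∀ r : ℝ, 0 < r → μ C ≤ ν (Metric.thickening r C) := by
    intro r hr
    refine ENNReal.le_of_forall_pos_le_add fun δ hδ _ => ?_
    obtain ⟨γ, hγ1, hγ2, hγc⟩ := hc ((δ : ℝ≥0∞) * ENNReal.ofReal r)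
      (ENNReal.mul_pos (by exact_mod_cast hδ.ne') (ENNReal.ofReal_pos.2 hr).ne')
    have hμC : μ C = γ (Prod.fst ⁻¹' C) := by
      rw [← hγ1, Measure.map_apply measurable_fst hC.measurableSet]
    have hsub : Prod.fst ⁻¹' C ⊆ (Prod.snd ⁻¹' Metric.thickening r C) ∪
        {p : α × α | ENNReal.ofReal r ≤ ENNReal.ofReal (dist p.1 p.2)} := by
      intro p hp
      by_cases hd : dist p.1 p.2 < r
      · exact Or.inl (Metric.mem_thickening_iff.2 ⟨p.1, hp, by rwa [dist_comm]⟩)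
      · exact Or.inr (ENNReal.ofReal_le_ofReal (le_of_not_gt hd))
    have hmark : γ {p : α × α | ENNReal.ofReal r ≤ ENNReal.ofReal (dist p.1 p.2)}
        ≤ (∫⁻ p, ENNReal.ofReal (dist p.1 p.2) ∂γ) / ENNReal.ofReal r :=
      meas_ge_le_lintegral_div measurable_ofReal_dist.aemeasurable
        (ENNReal.ofReal_pos.2 hr).ne' ENNReal.ofReal_ne_top
    calc μ C = γ (Prod.fst ⁻¹' C) := hμC
      _ ≤ γ (Prod.snd ⁻¹' Metric.thickening r C) +
          γ {p : α × α | ENNReal.ofReal r ≤ ENNReal.ofReal (dist p.1 p.2)} :=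
        (measure_mono hsub).trans (measure_union_le _ _)
      _ ≤ ν (Metric.thickening r C) + (δ : ℝ≥0∞) := by
        refine add_le_add ?_ ?_
        · rw [← hγ2, Measure.map_apply measurable_snd
            Metric.isOpen_thickening.measurableSet]
        · refine hmark.trans ?_
          rw [ENNReal.div_le_iff (ENNReal.ofReal_pos.2 hr).ne' ENNReal.ofReal_ne_top]
          exact hγc
  refine ge_of_tendsto (tendsto_measure_thickening_of_isClosed
    ⟨1, one_pos, measure_ne_top ν _⟩ hC) ?_
  filter_upwards [self_mem_nhdsWithin] with r hr using hthick r hr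

/-- Measures at Wasserstein distance `0` coincide (the second being finite). -/
lemma wass_eq_zero_eq (μ ν : Measure (∀ i, E i)) [IsFiniteMeasure ν]
    (h : wass E μ ν = 0) : μ = ν := by
  have hc : ∀ ε : ℝ≥0∞, 0 < ε → ∃ γ : Measure ((∀ i, E i) × (∀ i, E i)),
      γ.map Prod.fst = μ ∧ γ.map Prod.snd = ν ∧
      ∫⁻ p, ENNReal.ofReal (dist p.1 p.2) ∂γ ≤ ε := by
    intro ε hε
    have hlt : wass E μ ν < ε := by rw [h]; exact hε
    unfold wass at hlt
    rw [iInf_lt_iff] at hlt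
    obtain ⟨γ, hlt⟩ := hlt
    rw [iInf_lt_iff] at hlt
    obtain ⟨hγ, hlt⟩ := hlt
    exact ⟨γ, hγ.1, hγ.2, hlt.le⟩
  obtain ⟨γ0, hγ01, hγ02, -⟩ := hc 1 one_pos
  have huniv : μ Set.univ = ν Set.univ := by
    rw [← hγ01, ← hγ02, Measure.map_apply measurable_fst MeasurableSet.univ,
      Measure.map_apply measurable_snd MeasurableSet.univ]
    simp
  have hfinμ : IsFiniteMeasure μ := ⟨by rw [huniv]; exact measure_lt_top ν _⟩
  have hc' : ∀ ε : ℝ≥0∞, 0 < ε → ∃ γ : Measure ((∀ i, E i) × (∀ i, E i)),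
      γ.map Prod.fst = ν ∧ γ.map Prod.snd = μ ∧
      ∫⁻ p, ENNReal.ofReal (dist p.1 p.2) ∂γ ≤ ε := by
    intro ε hε
    obtain ⟨γ, h1, h2, hcost⟩ := hc ε hε
    refine ⟨γ.map Prod.swap, ?_, ?_, ?_⟩
    · rw [Measure.map_map measurable_fst measurable_swap]; exact h2
    · rw [Measure.map_map measurable_snd measurable_swap]; exact h1
    · rw [lintegral_map measurable_ofReal_dist measurable_swap]
      simpa [dist_comm] using hcost
  have key : ∀ C : Set (∀ i, E i), IsClosed C → μ C = ν C := fun C hCl =>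
    le_antisymm (meas_le_of_couplings μ ν hc hCl) (meas_le_of_couplings ν μ hc' hCl)
  refine ext_of_generate_finite {s | IsClosed s}
    (BorelSpace.measurable_eq.trans borel_eq_generateFrom_isClosed)
    (fun s hs t ht _ => hs.inter ht) (fun s hs => key s hs) huniv

end WassLemmas

/-- Transport of an approximate-join witness along an equality of attribute lists. -/
lemma approx_mem_aux [∀ a, MetricSpace (Val a)] (S : Set (DT A Val)) {t : ℝ≥0∞}
    {N : ℕ} (f : Fin N → A) (τ : Measure (∀ k, Val (f k))) (i : Fin N)
    {m : ℕ} (ι : Fin m → Fin N) (hmono : StrictMono ι) (hi : i ∈ Set.range ι)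
    (g : Fin m → A) (hg : (fun k => f (ι k)) = g)
    (σ : Measure (∀ k, Val (g k))) (hσ : (⟨m, g, σ⟩ : DT A Val) ∈ S)
    (hw : ∀ μ : Measure (∀ k, Val (g k)), HEq (red A Val f ι τ) μ →
      wass (fun k => Val (g k)) μ σ ≤ t) :
    ∃ (m' : ℕ) (ι' : Fin m' → Fin N) (σ' : Measure (∀ k : Fin m', Val (f (ι' k)))),
      StrictMono ι' ∧ i ∈ Set.range ι' ∧ (⟨m', f ∘ ι', σ'⟩ : DT A Val) ∈ S ∧
      wass (fun k : Fin m' => Val (f (ι' k))) (red A Val f ι' τ) σ' ≤ t := by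
  subst hg
  exact ⟨m, ι, σ, hmono, hi, hσ, hw _ HEq.rfl⟩


/- STATEMENT 15: for every threshold t ∈ [0,∞], the complex of approximate joins F^t is a
data subcomplex (closed under faces and degeneracies) satisfying the strong join
condition; F^{t₁} ⊆ F^{t₂} for t₁ ≤ t₂; F⁰ is the complex of perfect joins; and F^∞ is
the ambient complex.  (The covering hypothesis `hcover` records that every attribute
occurs in some table of 𝒮, as is the case for the attribute base of a data subcomplex of
interest.) -/

theorem approx_joins_filtration
    [Fintype A] [∀ a, MetricSpace (Val a)] [∀ a, CompactSpace (Val a)]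
    [∀ a, BorelSpace (Val a)]
    (S : Set (DT A Val)) (hsub : IsSubcomplex A Val S)
    (hfin : ∀ x ∈ S, IsFiniteMeasure x.2.2)
    (hcover : ∀ a : A, ∃ x ∈ S, ∃ i : Fin x.1, x.2.1 i = a) :
    (∀ t : ℝ≥0∞, IsSubcomplex A Val (ApproxJoins A Val S t) ∧
        StrongJoinCondition A Val (ApproxJoins A Val S t)) ∧
    (∀ t₁ t₂ : ℝ≥0∞, t₁ ≤ t₂ → ApproxJoins A Val S t₁ ⊆ ApproxJoins A Val S t₂) ∧
    ApproxJoins A Val S 0 = PerfectJoins A Val S ∧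
    ApproxJoins A Val S ⊤ = Set.univ := by
  constructor
  · intro t
    refine ⟨⟨?_, ?_⟩, ?_⟩
    · -- closure under faces
      intro n T τ i hx k
      obtain ⟨m, ι, σ, hι, hk, hσ, hw⟩ := hx (i.succAbove k)
      by_cases hmem : i ∈ Set.range ι
      · obtain ⟨j₀, hj₀⟩ := hmem
        cases m with
        | zero => exact j₀.elim0
        | succ m' =>
          have hne : ∀ q : Fin m', ι (j₀.succAbove q) ≠ i := by
            intro q h
            exact Fin.succAbove_ne j₀ q (hι.injective (h.trans hj₀.symm))
          choose ι'' spec using fun q => Fin.exists_succAbove_eq (hne q)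
          have hmono'' : StrictMono ι'' := by
            intro a b hab
            have hlt := hι ((Fin.strictMono_succAbove j₀) hab)
            rw [← spec a, ← spec b] at hlt
            exact Fin.succAbove_lt_succAbove_iff.1 hlt
          have hkr : k ∈ Set.range ι'' := by
            obtain ⟨j, hj⟩ := hk
            have hjne : j ≠ j₀ := by
              intro h
              apply Fin.succAbove_ne i k
              rw [← hj, h, hj₀]
            obtain ⟨j', hj'⟩ := Fin.exists_succAbove_eq hjne
            refine ⟨j', Fin.succAbove_right_injective (p := i) ?_⟩
            rw [spec j', hj', hj]
          refine approx_mem_aux A Val S (T ∘ i.succAbove) (face A Val T i τ) k ι''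
            hmono'' hkr (fun q => T (ι (j₀.succAbove q)))
            (funext fun q => congrArg T (spec q)) (red A Val (T ∘ ι) j₀.succAbove σ)
            (red_mem A Val S hsub j₀.succAbove (Fin.strictMono_succAbove j₀) (T ∘ ι) σ hσ)
            ?_
          intro μ hμ
          have e1 : red A Val (T ∘ i.succAbove) ι'' (face A Val T i τ)
              = red A Val T (fun q => i.succAbove (ι'' q)) τ :=
            (red_comp A Val T i.succAbove ι'' τ).symm
          have e2 : HEq (red A Val T (fun q => i.succAbove (ι'' q)) τ)
              (red A Val T (fun q => ι (j₀.succAbove q)) τ) :=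
            red_congr_heq A Val T τ (funext spec)
          have e3 : red A Val T (fun q => ι (j₀.succAbove q)) τ
              = red A Val (T ∘ ι) j₀.succAbove (red A Val T ι τ) :=
            red_comp A Val T ι j₀.succAbove τ
          have hμeq : μ = red A Val (T ∘ ι) j₀.succAbove (red A Val T ι τ) :=
            eq_of_heq ((hμ.symm.trans (heq_of_eq e1)).trans (e2.trans (heq_of_eq e3)))
          rw [hμeq]
          exact (wass_map_le (fun q => Val (T (ι q))) j₀.succAbove
            (red A Val T ι τ) σ).trans hw
      · obtain ⟨ι', hι', hfac⟩ := factor_succAbove ι hι hmem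
        have hkr : k ∈ Set.range ι' := by
          obtain ⟨j, hj⟩ := hk
          refine ⟨j, Fin.succAbove_right_injective (p := i) ?_⟩
          calc i.succAbove (ι' j) = (i.succAbove ∘ ι') j := rfl
            _ = ι j := by rw [hfac]
            _ = i.succAbove k := hj
        refine approx_mem_aux A Val S (T ∘ i.succAbove) (face A Val T i τ) k ι' hι' hkr
          (fun j => T (ι j)) (funext fun j => congrArg T (congrFun hfac j)) σ hσ ?_
        intro μ hμ
        have e1 : red A Val (T ∘ i.succAbove) ι' (face A Val T i τ)
            = red A Val T (fun q => i.succAbove (ι' q)) τ :=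
          (red_comp A Val T i.succAbove ι' τ).symm
        have e2 : HEq (red A Val T (fun q => i.succAbove (ι' q)) τ) (red A Val T ι τ) :=
          red_congr_heq A Val T τ (funext (congrFun hfac))
        have hμeq : μ = red A Val T ι τ :=
          eq_of_heq ((hμ.symm.trans (heq_of_eq e1)).trans e2)
        rw [hμeq]
        exact hw
    · -- closure under degeneracies
      intro n T τ i hx k
      obtain ⟨m, ι, σ, hι, ⟨j, hj⟩, hσ, hw⟩ := hx (i.predAbove k)
      obtain ⟨s, hs, hsec, hsk⟩ := exists_section i k
      refine approx_mem_aux A Val S (T ∘ i.predAbove) (degen A Val T i τ) k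
        (fun q => s (ι q)) (hs.comp hι) ⟨j, by show s (ι j) = k; rw [hj, hsk]⟩
        (fun q => T (ι q)) (funext fun q => congrArg T (hsec (ι q))) σ hσ ?_
      intro μ hμ
      have e1 : red A Val (T ∘ i.predAbove) (fun q => s (ι q)) (degen A Val T i τ)
          = red A Val T (fun q => i.predAbove (s (ι q))) τ :=
        (red_comp A Val T i.predAbove (fun q => s (ι q)) τ).symm
      have e2 : HEq (red A Val T (fun q => i.predAbove (s (ι q))) τ) (red A Val T ι τ) :=
        red_congr_heq A Val T τ (funext fun q => hsec (ι q))
      have hμeq : μ = red A Val T ι τ :=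
        eq_of_heq ((hμ.symm.trans (heq_of_eq e1)).trans e2)
      rw [hμeq]
      exact hw
    · -- strong join condition
      intro n0 n01 n02 n012 ι01 ι02 h01 h02 M T012 τ01 τ02 hm1 hm2 _ τ012 hr1 hr2
      intro k
      have hcov : k ∈ Set.range M.μ01 ∪ Set.range M.μ02 := by
        rw [M.cover]; exact Set.mem_univ k
      rcases hcov with ⟨j, hj⟩ | ⟨j, hj⟩
      · obtain ⟨m, ι, σ, hι, ⟨l, hl⟩, hσ, hw⟩ := hm1 j
        refine ⟨m, fun q => M.μ01 (ι q), σ, M.mono01.comp hι,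
          ⟨l, by show M.μ01 (ι l) = k; rw [hl, hj]⟩, hσ, ?_⟩
        have e : red A Val T012 (fun q => M.μ01 (ι q)) τ012
            = red A Val (T012 ∘ M.μ01) ι (red A Val T012 M.μ01 τ012) :=
          red_comp A Val T012 M.μ01 ι τ012
        rw [e, hr1]
        exact hw
      · obtain ⟨m, ι, σ, hι, ⟨l, hl⟩, hσ, hw⟩ := hm2 j
        refine ⟨m, fun q => M.μ02 (ι q), σ, M.mono02.comp hι,
          ⟨l, by show M.μ02 (ι l) = k; rw [hl, hj]⟩, hσ, ?_⟩
        have e : red A Val T012 (fun q => M.μ02 (ι q)) τ012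
            = red A Val (T012 ∘ M.μ02) ι (red A Val T012 M.μ02 τ012) :=
          red_comp A Val T012 M.μ02 ι τ012
        rw [e, hr2]
        exact hw
  refine ⟨?_, ?_, ?_⟩
  · -- monotonicity
    intro t₁ t₂ ht x hx i
    obtain ⟨m, ι, σ, hι, hi, hσ, hw⟩ := hx i
    exact ⟨m, ι, σ, hι, hi, hσ, hw.trans ht⟩
  · -- F⁰ is the complex of perfect joins
    ext x
    constructor
    · intro hx i
      obtain ⟨m, ι, σ, hι, hi, hσ, hw⟩ := hx i
      have hfs : IsFiniteMeasure σ := hfin ⟨m, x.2.1 ∘ ι, σ⟩ hσ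
      have heq : red A Val x.2.1 ι x.2.2 = σ :=
        wass_eq_zero_eq (fun k => Val (x.2.1 (ι k))) _ _ (le_antisymm hw zero_le)
      exact ⟨m, ι, hι, hi, by rw [heq]; exact hσ⟩
    · intro hx i
      obtain ⟨m, ι, hι, hi, hσ⟩ := hx i
      exact ⟨m, ι, red A Val x.2.1 ι x.2.2, hι, hi, hσ,
        wass_self_le_zero (fun k => Val (x.2.1 (ι k))) _⟩
  · -- F^∞ is everything
    refine Set.eq_univ_of_forall fun x => ?_
    intro i
    obtain ⟨y, hy, j, hji⟩ := hcover (x.2.1 i)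
    obtain ⟨N, f, ρ⟩ := y
    have h1 : StrictMono (fun _ : Fin 1 => i) :=
      fun a b h => absurd (Subsingleton.elim a b) (ne_of_lt h)
    have h2 : StrictMono (fun _ : Fin 1 => j) :=
      fun a b h => absurd (Subsingleton.elim a b) (ne_of_lt h)
    exact approx_mem_aux A Val S x.2.1 x.2.2 i (fun _ : Fin 1 => i) h1 ⟨0, rfl⟩
      (fun q => f ((fun _ : Fin 1 => j) q)) (funext fun _ => hji.symm)
      (red A Val f (fun _ : Fin 1 => j) ρ)
      (red_mem A Val S hsub (fun _ : Fin 1 => j) h2 f ρ hy)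
      (fun μ _ => le_top)
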